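/- Let n ≥ 1 and let B be a generalized Boolean algebra together with a set X ⊆ B of n distinct elements such that: the only subset of B containing X and ⊥ and closed under ⊔, ⊓, \ is B itself, and for every generalized Boolean algebra C, every map X → C extends to a map B → C preserving ⊔, ⊓, \ and ⊥. Then |B| = 2^{2^n − 1}, and B has exactly 2^n − 1 atoms. -/

import Mathlib

universe u

open Finset

namespace Stmt11Aux

variable {ι : Type*} [DecidableEq ι] {D : Type*} {D' : Type*} [GeneralizedBooleanAlgebra D]
  [GeneralizedBooleanAlgebra D']

/-- minterm fold -/
def mt (e : ι → D) (a : ι → Bool) (w : D) : List ι → D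
  | [] => w
  | x :: l => if a x then mt e a w l ⊓ e x else mt e a w l \ e x

theorem mt_le (e : ι → D) (a : ι → Bool) (w : D) (l : List ι) : mt e a w l ≤ w := by
  induction l with
  | nil => exact le_rfl
  | cons x l ih =>
    simp only [mt]
    split
    · exact inf_le_left.trans ih
    · exact sdiff_le.trans ih

theorem mt_le_of_mem (e : ι → D) (a : ι → Bool) (w : D) {l : List ι} {x : ι}
    (hx : x ∈ l) (ha : a x = true) : mt e a w l ≤ e x := by
  induction l with
  | nil => simp at hx
  | cons y l ih =>
    rcases List.mem_cons.1 hx with rfl | hx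
    · simp only [mt, ha, if_true]
      exact inf_le_right
    · simp only [mt]
      split
      · exact inf_le_left.trans (ih hx)
      · exact sdiff_le.trans (ih hx)

theorem mt_disjoint (e : ι → D) (a : ι → Bool) (w : D) {l : List ι} {x : ι}
    (hx : x ∈ l) (ha : a x = false) : Disjoint (mt e a w l) (e x) := by
  induction l with
  | nil => simp at hx
  | cons y l ih =>
    rcases List.mem_cons.1 hx with rfl | hx
    · simp only [mt, ha, if_false, Bool.false_eq_true]
      exact disjoint_sdiff_self_left
    · simp only [mt]
      split
      · exact (ih hx).mono_left inf_le_left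
      · exact (ih hx).mono_left sdiff_le

theorem mt_inf (e : ι → D) (a : ι → Bool) (w v : D) (l : List ι) :
    mt e a (w ⊓ v) l = mt e a w l ⊓ v := by
  induction l with
  | nil => rfl
  | cons y l ih =>
    simp only [mt, ih]
    split
    · exact inf_right_comm _ _ _
    · exact (sdiff_inf_right_comm _ _ _).symm

theorem mt_update (e : ι → D) (a : ι → Bool) (w : D) {l : List ι} {y : ι} (b : Bool)
    (hy : y ∉ l) : mt e (Function.update a y b) w l = mt e a w l := by
  induction l with
  | nil => rfl
  | cons x l ih =>
    have hxy : x ≠ y := fun h => hy (h ▸ (List.mem_cons_self : x ∈ x :: l))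
    have hyl : y ∉ l := fun h => hy (List.mem_cons_of_mem _ h)
    simp only [mt, Function.update_of_ne hxy, ih hyl]

theorem mt_part [Fintype (ι → Bool)] (e : ι → D) (w : D) {l : List ι} (hl : l.Nodup) :
    w = (Finset.univ : Finset (ι → Bool)).sup (fun a => mt e a w l) := by
  induction l with
  | nil =>
    simp only [mt]
    rw [Finset.sup_const Finset.univ_nonempty]
  | cons y l ih =>
    obtain ⟨hy, hl'⟩ := List.nodup_cons.1 hl
    refine le_antisymm ?_ (Finset.sup_le fun a _ => mt_le e a w _)
    refine le_trans (le_of_eq (ih hl')) (Finset.sup_le fun a _ => ?_)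
    have h1 : mt e a w l = (mt e a w l ⊓ e y) ⊔ (mt e a w l \ e y) := (sup_inf_sdiff _ _).symm
    rw [h1]
    refine sup_le ?_ ?_
    · have h2 : mt e (Function.update a y true) w (y :: l) = mt e a w l ⊓ e y := by
        simp only [mt, Function.update_self, if_true, mt_update e a w true hy]
      exact h2 ▸ Finset.le_sup (f := fun a => mt e a w (y :: l)) (Finset.mem_univ (Function.update a y true))
    · have h2 : mt e (Function.update a y false) w (y :: l) = mt e a w l \ e y := by
        simp only [mt, Function.update_self, if_false, mt_update e a w false hy,
          Bool.false_eq_true]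
      exact h2 ▸ Finset.le_sup (f := fun a => mt e a w (y :: l)) (Finset.mem_univ (Function.update a y false))

theorem map_mt (f : D → D') (hinf : ∀ a b : D, f (a ⊓ b) = f a ⊓ f b)
    (hsdiff : ∀ a b : D, f (a \ b) = f a \ f b) (e : ι → D) (a : ι → Bool) (w : D)
    (l : List ι) : f (mt e a w l) = mt (fun x => f (e x)) a (f w) l := by
  induction l with
  | nil => rfl
  | cons y l ih =>
    simp only [mt]
    split
    · rw [hinf, ih]
    · rw [hsdiff, ih]

theorem map_finset_sup {β : Type*} (f : D → D') (hbot : f ⊥ = ⊥)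
    (hsup : ∀ a b : D, f (a ⊔ b) = f a ⊔ f b) (s : Finset β) (F : β → D) :
    f (s.sup F) = s.sup (fun b => f (F b)) := by
  induction s using Finset.cons_induction with
  | empty => simpa using hbot
  | cons x s hx ih => rw [Finset.sup_cons, Finset.sup_cons, hsup, ih]

theorem finset_sup_sdiff_distrib {β : Type*} (s : Finset β) (F : β → D) (c : D) :
    (s.sup F) \ c = s.sup (fun b => F b \ c) := by
  induction s using Finset.cons_induction with
  | empty => simp
  | cons x s hx ih => rw [Finset.sup_cons, Finset.sup_cons, sup_sdiff, ih]

theorem mem_finset_sup_set {β γ : Type*} (s : Finset β) (F : β → Set γ) (x : γ) :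
    x ∈ s.sup F ↔ ∃ b ∈ s, x ∈ F b := by
  induction s using Finset.cons_induction with
  | empty => simp
  | cons y s hy ih =>
    rw [Finset.sup_cons]
    constructor
    · intro h
      rcases h with h | h
      · exact ⟨y, Finset.mem_cons_self y s, h⟩
      · obtain ⟨b, hb, hb'⟩ := ih.1 h
        exact ⟨b, Finset.mem_cons_of_mem hb, hb'⟩
    · rintro ⟨b, hb, hb'⟩
      rcases Finset.mem_cons.1 hb with rfl | hb
      · exact Or.inl hb'
      · exact Or.inr (ih.2 ⟨b, hb, hb'⟩)

end Stmt11Aux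

theorem stmt11 (n : ℕ) (hn : 1 ≤ n) (B : Type u) [GeneralizedBooleanAlgebra B]
    (X : Set B) (hX : X.Finite) (hcard : X.ncard = n)
    (hgen : ∀ T : Set B, X ⊆ T → ⊥ ∈ T →
      (∀ a b : B, a ∈ T → b ∈ T → a ⊔ b ∈ T ∧ a ⊓ b ∈ T ∧ a \ b ∈ T) →
      T = Set.univ)
    (hfree : ∀ (C : Type u) [GeneralizedBooleanAlgebra C], ∀ g : X → C,
      ∃ f : B → C, (∀ a b : B, f (a ⊔ b) = f a ⊔ f b) ∧
        (∀ a b : B, f (a ⊓ b) = f a ⊓ f b) ∧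
        (∀ a b : B, f (a \ b) = f a \ f b) ∧ f ⊥ = ⊥ ∧ ∀ x : X, f x = g x) :
    Nat.card B = 2 ^ (2 ^ n - 1) ∧ {a : B | IsAtom a}.ncard = 2 ^ n - 1 := by
  classical
  haveI : Fintype X := hX.fintype
  set α := {a : X → Bool // ∃ x, a x = true} with hα
  let e : X → B := fun x => (x : B)
  let g : X → Set α := fun x => {a : α | a.1 x = true}
  obtain ⟨f, hfsup, hfinf, hfsdiff, hfbot, hfg⟩ := hfree (Set α) g
  let l : List X := Finset.univ.toList
  have hlmem : ∀ x : X, x ∈ l := fun x => Finset.mem_toList.2 (Finset.mem_univ x)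
  have hlnd : l.Nodup := Finset.nodup_toList _
  let AA : α → B := fun a => Stmt11Aux.mt e a.1 (e a.2.choose) l
  let FS : Set α → Finset α := fun S => Finset.univ.filter (fun a => a ∈ S)
  have hFS : ∀ (S : Set α) (a : α), a ∈ FS S ↔ a ∈ S := by
    intro S a
    simp only [FS, Finset.mem_filter, Finset.mem_univ, true_and]
  -- w-independence of minterms
  have hmm : ∀ (a : α) (x₁ x₂ : X), a.1 x₁ = true → a.1 x₂ = true →
      Stmt11Aux.mt e a.1 (e x₁) l = Stmt11Aux.mt e a.1 (e x₁ ⊓ e x₂) l := by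
    intro a x₁ x₂ h1 h2
    rw [Stmt11Aux.mt_inf]
    exact (inf_eq_left.2 (Stmt11Aux.mt_le_of_mem e a.1 (e x₁) (hlmem x₂) h2)).symm
  have hAA : ∀ (a : α) (x : X), a.1 x = true → Stmt11Aux.mt e a.1 (e x) l = AA a := by
    intro a x hx
    have hc := a.2.choose_spec
    show Stmt11Aux.mt e a.1 (e x) l = Stmt11Aux.mt e a.1 (e a.2.choose) l
    rw [hmm a x a.2.choose hx hc, hmm a a.2.choose x hc hx, inf_comm]
  have hAAle : ∀ (a : α) (x : X), a.1 x = true → AA a ≤ e x :=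
    fun a x hx => Stmt11Aux.mt_le_of_mem e a.1 _ (hlmem x) hx
  have hAAdisjx : ∀ (a : α) (x : X), a.1 x = false → Disjoint (AA a) (e x) :=
    fun a x hx => Stmt11Aux.mt_disjoint e a.1 _ (hlmem x) hx
  have hdisj : ∀ a a' : α, a ≠ a' → Disjoint (AA a) (AA a') := by
    intro a a' hne
    have hex : ∃ x : X, a.1 x ≠ a'.1 x := by
      by_contra h
      push_neg at h
      exact hne (Subtype.ext (funext h))
    obtain ⟨x, hx⟩ := hex
    cases h1 : a.1 x <;> cases h2 : a'.1 x
    · exact absurd (h1.trans h2.symm) hx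
    · exact (hAAdisjx a x h1).mono_right (hAAle a' x h2)
    · exact ((hAAdisjx a' x h2).mono_right (hAAle a x h1)).symm
    · exact absurd (h1.trans h2.symm) hx
  -- membership in minterms of Set α
  have hmem_mt : ∀ (a : X → Bool) (W : Set α) (l' : List X) (b : α),
      b ∈ Stmt11Aux.mt g a W l' ↔ b ∈ W ∧ ∀ x ∈ l', b.1 x = a x := by
    intro a W l' b
    induction l' with
    | nil => simp [Stmt11Aux.mt]
    | cons y l' ih =>
      simp only [Stmt11Aux.mt]
      by_cases h : a y = true
      · rw [if_pos h]
        have : b ∈ Stmt11Aux.mt g a W l' ⊓ g y ↔ b ∈ Stmt11Aux.mt g a W l' ∧ b.1 y = true :=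
          Iff.rfl
        rw [this, ih, List.forall_mem_cons, h]
        tauto
      · rw [if_neg h]
        have hb : a y = false := by simpa using h
        have : b ∈ Stmt11Aux.mt g a W l' \ g y ↔ b ∈ Stmt11Aux.mt g a W l' ∧ ¬ b.1 y = true :=
          Iff.rfl
        rw [this, ih, List.forall_mem_cons, hb]
        simp only [Bool.not_eq_true]
        tauto
  have hfAA : ∀ a : α, f (AA a) = {a} := by
    intro a
    have hmap := Stmt11Aux.map_mt f hfinf hfsdiff e a.1 (e a.2.choose) l
    have hfe : (fun x : X => f (e x)) = g := funext fun x => hfg x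
    rw [hfe] at hmap
    show f (Stmt11Aux.mt e a.1 (e a.2.choose) l) = {a}
    rw [hmap, hfg a.2.choose]
    ext b
    rw [hmem_mt]
    constructor
    · rintro ⟨_, hall⟩
      have : b = a := Subtype.ext (funext fun x => hall x (hlmem x))
      simpa using this
    · intro hb
      have hb' : b = a := by simpa using hb
      subst hb'
      exact ⟨b.2.choose_spec, fun x _ => rfl⟩
  -- algebra of sups of minterms
  have hsup_inf : ∀ S T : Finset α, (S.sup AA) ⊓ (T.sup AA) = (S ∩ T).sup AA := by
    intro S T
    rw [Finset.sup_inf_distrib_right]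
    have h1 : ∀ a : α, AA a ⊓ T.sup AA = T.sup fun a' => AA a ⊓ AA a' := fun a =>
      Finset.sup_inf_distrib_left T AA (AA a)
    refine le_antisymm (Finset.sup_le fun a ha => ?_) (Finset.sup_le fun a ha => ?_)
    · rw [h1 a]
      refine Finset.sup_le fun a' ha' => ?_
      by_cases h : a = a'
      · subst h
        rw [inf_idem]
        exact Finset.le_sup (Finset.mem_inter.2 ⟨ha, ha'⟩)
      · rw [disjoint_iff.1 (hdisj a a' h)]
        exact bot_le
    · obtain ⟨haS, haT⟩ := Finset.mem_inter.1 ha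
      refine le_trans ?_ (Finset.le_sup (f := fun a => AA a ⊓ T.sup AA) haS)
      exact le_inf le_rfl (Finset.le_sup haT)
  have hsup_sdiff : ∀ S T : Finset α, (S.sup AA) \ (T.sup AA) = (S \ T).sup AA := by
    intro S T
    rw [Stmt11Aux.finset_sup_sdiff_distrib]
    refine le_antisymm (Finset.sup_le fun a ha => ?_) (Finset.sup_le fun a ha => ?_)
    · by_cases h : a ∈ T
      · refine le_trans (sdiff_le_sdiff_left (Finset.le_sup h)) ?_
        rw [sdiff_self]
        exact bot_le
      · have hd : Disjoint (AA a) (T.sup AA) :=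
          Finset.disjoint_sup_right.2 fun a' ha' => hdisj a a' (fun he => h (he ▸ ha'))
        rw [hd.sdiff_eq_left]
        exact Finset.le_sup (Finset.mem_sdiff.2 ⟨ha, h⟩)
    · obtain ⟨haS, haT⟩ := Finset.mem_sdiff.1 ha
      have hd : Disjoint (AA a) (T.sup AA) :=
        Finset.disjoint_sup_right.2 fun a' ha' => hdisj a a' (fun he => haT (he ▸ ha'))
      refine le_trans (le_of_eq hd.sdiff_eq_left.symm) ?_
      exact Finset.le_sup (f := fun a => AA a \ T.sup AA) haS
  -- generator representation
  have hgenrep : ∀ x : X, e x = (FS (g x)).sup AA := by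
    intro x₀
    have hpart := Stmt11Aux.mt_part e (e x₀) hlnd
    refine le_antisymm ?_ (Finset.sup_le fun a ha => ?_)
    · refine le_trans (le_of_eq hpart) (Finset.sup_le fun a _ => ?_)
      by_cases h : a x₀ = true
      · have hmem : (⟨a, ⟨x₀, h⟩⟩ : α) ∈ FS (g x₀) := by
          rw [hFS]
          exact h
        rw [hAA ⟨a, ⟨x₀, h⟩⟩ x₀ h]
        exact Finset.le_sup hmem
      · have hfalse : a x₀ = false := by simpa using h
        have := (Stmt11Aux.mt_disjoint e a (e x₀) (hlmem x₀) hfalse).eq_bot_of_le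
          (Stmt11Aux.mt_le e a (e x₀) l)
        rw [this]
        exact bot_le
    · have hax : a.1 x₀ = true := by
        rw [hFS] at ha
        exact ha
      exact hAAle a x₀ hax
  -- every element is the sup of minterms given by f
  have hrep : ∀ b : B, b = (FS (f b)).sup AA := by
    have hT := hgen {b : B | b = (FS (f b)).sup AA} ?_ ?_ ?_
    · intro b
      have : b ∈ {b : B | b = (FS (f b)).sup AA} := hT ▸ Set.mem_univ b
      exact this
    · intro x hx
      have h1 : f x = g ⟨x, hx⟩ := hfg ⟨x, hx⟩
      show x = (FS (f x)).sup AA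
      rw [h1]
      exact hgenrep ⟨x, hx⟩
    · show (⊥ : B) = (FS (f ⊥)).sup AA
      rw [hfbot]
      have : FS (⊥ : Set α) = (∅ : Finset α) := by
        ext a; simp [hFS]
      rw [this, Finset.sup_empty]
    · intro b₁ b₂ h1 h2
      have h1' : b₁ = (FS (f b₁)).sup AA := h1
      have h2' : b₂ = (FS (f b₂)).sup AA := h2
      have hu : FS (f (b₁ ⊔ b₂)) = FS (f b₁) ∪ FS (f b₂) := by
        ext a
        simp only [Finset.mem_union, hFS, hfsup]
        exact Iff.rfl
      have hi : FS (f (b₁ ⊓ b₂)) = FS (f b₁) ∩ FS (f b₂) := by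
        ext a
        simp only [Finset.mem_inter, hFS, hfinf]
        exact Iff.rfl
      have hd : FS (f (b₁ \ b₂)) = FS (f b₁) \ FS (f b₂) := by
        ext a
        simp only [Finset.mem_sdiff, hFS, hfsdiff]
        exact Iff.rfl
      refine ⟨?_, ?_, ?_⟩
      · show b₁ ⊔ b₂ = (FS (f (b₁ ⊔ b₂))).sup AA
        rw [hu, Finset.sup_union, ← h1', ← h2']
      · show b₁ ⊓ b₂ = (FS (f (b₁ ⊓ b₂))).sup AA
        rw [hi, ← hsup_inf, ← h1', ← h2']
      · show b₁ \ b₂ = (FS (f (b₁ \ b₂))).sup AA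
        rw [hd, ← hsup_sdiff, ← h1', ← h2']
  have hinj : Function.Injective f := by
    intro b₁ b₂ h
    rw [hrep b₁, hrep b₂, h]
  have hsurj : Function.Surjective f := by
    intro c
    refine ⟨(FS c).sup AA, ?_⟩
    rw [Stmt11Aux.map_finset_sup f hfbot hfsup]
    rw [Finset.sup_congr rfl fun a _ => hfAA a]
    ext b
    rw [Stmt11Aux.mem_finset_sup_set]
    constructor
    · rintro ⟨b', hb', h⟩
      have : b = b' := h
      rw [this, ← hFS (S := c)]
      exact hb'
    · intro hb
      exact ⟨b, (hFS c b).2 hb, rfl⟩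
  let E : B ≃ Set α := Equiv.ofBijective f ⟨hinj, hsurj⟩
  have hmono : ∀ b₁ b₂ : B, f b₁ ≤ f b₂ ↔ b₁ ≤ b₂ := by
    intro b₁ b₂
    constructor
    · intro h
      have : f (b₁ ⊔ b₂) = f b₂ := by rw [hfsup, sup_eq_right.2 h]
      exact sup_eq_right.1 (hinj this)
    · intro h
      rw [← sup_eq_right]
      rw [← hfsup, sup_eq_right.2 h]
  let OI : B ≃o Set α := { E with map_rel_iff' := fun {b₁ b₂} => hmono b₁ b₂ }
  -- cardinalities
  have hcardι : Fintype.card X = n := by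
    rw [← Nat.card_eq_fintype_card, Nat.card_coe_set_eq, hcard]
  have hcardfun : Fintype.card (X → Bool) = 2 ^ n := by
    rw [Fintype.card_fun, hcardι, Fintype.card_bool]
  have hcardα : Fintype.card α = 2 ^ n - 1 := by
    have hequiv : α ≃ {a : X → Bool // ¬ a = fun _ => false} := by
      refine Equiv.subtypeEquivRight fun a => ?_
      constructor
      · rintro ⟨x, hx⟩ h
        rw [h] at hx
        simp at hx
      · intro h
        by_contra h2
        push_neg at h2
        refine h (funext fun x => ?_)
        simpa using h2 x
    rw [Fintype.card_congr hequiv, Fintype.card_subtype_compl, hcardfun,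
      Fintype.card_subtype_eq]
  constructor
  · rw [Nat.card_congr E, Nat.card_eq_fintype_card, Fintype.card_set, hcardα]
  · have hAtomIff : ∀ b : B, IsAtom b ↔ IsAtom (f b) := by
      intro b
      exact (OrderIso.isAtom_iff OI b).symm
    have e1 : {b : B | IsAtom b} ≃ {S : Set α | IsAtom S} :=
      E.subtypeEquiv fun b => hAtomIff b
    have e2 : α ≃ {S : Set α | IsAtom S} := by
      refine Equiv.ofBijective (fun a => ⟨{a}, Set.isAtom_singleton a⟩) ⟨?_, ?_⟩
      · intro a a' h
        have : ({a} : Set α) = {a'} := congrArg Subtype.val h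
        exact Set.singleton_injective this
      · rintro ⟨S, hS⟩
        obtain ⟨x, rfl⟩ := Set.isAtom_iff.1 hS
        exact ⟨x, rfl⟩
    rw [← Nat.card_coe_set_eq, Nat.card_congr e1, ← Nat.card_congr e2,
      Nat.card_eq_fintype_card, hcardα]
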